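/- arXiv:1512.01876 — 5 statements merged into one kernel-verified Lean document; each statement's English description precedes it below -/
import Mathlib

section
/- Let P = ⟨p_1,…,p_m⟩ and Q = ⟨q_1,…,q_n⟩ be point sequences in ℝ^d. The minimum of Σ_{(i,j)∈C} ‖p_i − q_j‖ over all monotone correspondence sets C that cover P and Q equals the minimum of Σ_{(i,j)∈π} ‖p_i − q_j‖ over all admissible paths π from (1,1) to (m,n). (That is, the correspondence formulation and the grid-path formulation of dynamic time warping coincide.) -/
/-- A step of an admissible path: each coordinate increases by 0 or 1, not both by 0. -/
def IsStep (p q : ℕ × ℕ) : Prop :=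
  (q.1 = p.1 ∨ q.1 = p.1 + 1) ∧ (q.2 = p.2 ∨ q.2 = p.2 + 1) ∧ q ≠ p

/-- Membership in the grid `[1..m] × [1..n]`. -/
def InGrid (m n : ℕ) (p : ℕ × ℕ) : Prop :=
  1 ≤ p.1 ∧ p.1 ≤ m ∧ 1 ≤ p.2 ∧ p.2 ≤ n

/-- An admissible path from `s` to `t` in the grid `[1..m] × [1..n]`. -/
def IsAdmissible (m n : ℕ) (s t : ℕ × ℕ) (π : List (ℕ × ℕ)) : Prop :=
  π.head? = some s ∧ π.getLast? = some t ∧ List.Chain' IsStep π ∧ ∀ p ∈ π, InGrid m n p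

/-- The sum of the weights `ω(i,j) = ‖p_i - q_j‖` of the grid points along a path. -/
noncomputable def pathCost {d : ℕ} (P Q : ℕ → EuclideanSpace ℝ (Fin d))
    (π : List (ℕ × ℕ)) : ℝ :=
  (π.map (fun p => dist (P p.1) (Q p.2))).sum

/-- The maximum of the weights `ω(i,j) = ‖p_i - q_j‖` of the grid points along a path. -/
noncomputable def pathMax {d : ℕ} (P Q : ℕ → EuclideanSpace ℝ (Fin d))
    (π : List (ℕ × ℕ)) : ℝ :=
  (π.map (fun p => dist (P p.1) (Q p.2))).foldr max 0

/-- Dynamic time warping distance: minimum over admissible paths from `(1,1)` to `(m,n)`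
of the sum of the weights along the path. -/
noncomputable def dtw {d : ℕ} (m n : ℕ) (P Q : ℕ → EuclideanSpace ℝ (Fin d)) : ℝ :=
  sInf {c : ℝ | ∃ π : List (ℕ × ℕ),
    IsAdmissible m n (1, 1) (m, n) π ∧ c = pathCost P Q π}

/-- Discrete Fréchet distance: minimum over admissible paths from `(1,1)` to `(m,n)`
of the maximum of the weights along the path. -/
noncomputable def dfr {d : ℕ} (m n : ℕ) (P Q : ℕ → EuclideanSpace ℝ (Fin d)) : ℝ :=
  sInf {c : ℝ | ∃ π : List (ℕ × ℕ),
    IsAdmissible m n (1, 1) (m, n) π ∧ c = pathMax P Q π}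

/-- A monotone correspondence set covering both sequences: a subset of the grid
`[1..m] × [1..n]` that is monotone and in which every row index `i ∈ [1..m]` and
every column index `j ∈ [1..n]` occurs. -/
def IsMonotoneCorrespondence (m n : ℕ) (C : Finset (ℕ × ℕ)) : Prop :=
  (∀ p ∈ C, InGrid m n p) ∧
  (∀ p ∈ C, ∀ q ∈ C, (p.1 < q.1 → p.2 ≤ q.2) ∧ (p.2 < q.2 → p.1 ≤ q.1)) ∧
  (∀ i, 1 ≤ i → i ≤ m → ∃ j, (i, j) ∈ C) ∧
  (∀ j, 1 ≤ j → j ≤ n → ∃ i, (i, j) ∈ C)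

-- Auxiliary lemmas
def StepRel (p q : ℕ × ℕ) : Prop := p.1 ≤ q.1 ∧ p.2 ≤ q.2 ∧ p.1 + p.2 < q.1 + q.2

lemma isStep_stepRel {p q : ℕ × ℕ} (h : IsStep p q) : StepRel p q := by
  obtain ⟨h1, h2, h3⟩ := h
  have hne : ¬ (q.1 = p.1 ∧ q.2 = p.2) := by
    intro ⟨a, b⟩; exact h3 (Prod.ext a b)
  unfold StepRel
  rcases h1 with h1 | h1 <;> rcases h2 with h2 | h2 <;> simp_all <;> omega

instance : IsTrans (ℕ × ℕ) StepRel :=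
  ⟨fun a b c h1 h2 => ⟨h1.1.trans h2.1, h1.2.1.trans h2.2.1, h1.2.2.trans h2.2.2⟩⟩

lemma chain_ivt (f : ℕ × ℕ → ℕ) (hf : ∀ p q, IsStep p q → f q ≤ f p + 1) :
    ∀ (l : List (ℕ × ℕ)) (s : ℕ × ℕ), List.Chain' IsStep l → l.head? = some s →
      ∀ i, f s ≤ i → (∃ t ∈ l, i ≤ f t) → ∃ t ∈ l, f t = i := by
  intro l
  induction l with
  | nil => simp
  | cons a l ih =>
    intro s hc hh i hsi ht
    obtain ⟨t, htl, hit⟩ := ht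
    simp only [List.head?_cons, Option.some_inj] at hh
    subst hh
    rcases eq_or_lt_of_le hsi with h | h
    · exact ⟨a, List.mem_cons_self, h⟩
    · cases l with
      | nil =>
        simp only [List.mem_singleton] at htl; subst htl; omega
      | cons b l' =>
        obtain ⟨hab, hc'⟩ := List.isChain_cons_cons.mp hc
        have hb : f b ≤ i := le_trans (hf _ _ hab) h
        have htl' : t ∈ b :: l' := by
          rcases List.mem_cons.mp htl with rfl | h'
          · omega
          · exact h'
        obtain ⟨u, hu, hfu⟩ := ih b hc' rfl i hb ⟨t, htl', hit⟩
        exact ⟨u, List.mem_cons_of_mem _ hu, hfu⟩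

lemma path_to_corr {d : ℕ} (m n : ℕ) (P Q : ℕ → EuclideanSpace ℝ (Fin d))
    (π : List (ℕ × ℕ)) (hπ : IsAdmissible m n (1, 1) (m, n) π) :
    ∃ C : Finset (ℕ × ℕ), IsMonotoneCorrespondence m n C ∧
      ∑ p ∈ C, dist (P p.1) (Q p.2) = pathCost P Q π := by
  obtain ⟨hh, hl, hc, hg⟩ := hπ
  have hmem_last : (m, n) ∈ π := by
    obtain ⟨h, he⟩ := List.mem_getLast?_eq_getLast (l := π) (x := (m, n)) (by simp [hl])
    exact he ▸ List.getLast_mem h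
  have hmem_head : ((1, 1) : ℕ × ℕ) ∈ π := List.mem_of_mem_head? (by simp [hh])
  have hchainR : List.Chain' StepRel π := hc.imp fun _ _ => isStep_stepRel
  have hpw : List.Pairwise StepRel π := List.isChain_iff_pairwise.mp hchainR
  have hnd : π.Nodup := hpw.imp (fun h => by
    intro he; subst he; exact absurd h.2.2 (lt_irrefl _))
  have hsym : ∀ p ∈ π, ∀ q ∈ π, p = q ∨ StepRel p q ∨ StepRel q p := by
    have hpw' : List.Pairwise (fun p q => StepRel p q ∨ StepRel q p) π :=
      hpw.imp fun h => Or.inl h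
    intro p hp q hq
    by_cases hpq : p = q
    · exact Or.inl hpq
    · exact Or.inr (by haveI : Std.Symm (fun p q : ℕ × ℕ => StepRel p q ∨ StepRel q p) := ⟨fun a b h => h.symm⟩; exact hpw'.forall hp hq hpq)
  refine ⟨π.toFinset, ⟨?_, ?_, ?_, ?_⟩, ?_⟩
  · intro p hp; exact hg p (List.mem_toFinset.mp hp)
  · intro p hp q hq
    rw [List.mem_toFinset] at hp hq
    rcases hsym p hp q hq with rfl | h | h
    · exact ⟨fun _ => le_rfl, fun _ => le_rfl⟩
    · exact ⟨fun _ => h.2.1, fun _ => h.1⟩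
    · obtain ⟨ha, hb, _⟩ := h
      exact ⟨fun h1 => by omega, fun h2 => by omega⟩
  · intro i h1 him
    have := chain_ivt Prod.fst (fun p q h => by rcases h.1 with h' | h' <;> omega)
      π (1, 1) hc hh i h1 ⟨(m, n), hmem_last, him⟩
    obtain ⟨⟨ti, tj⟩, ht, hft⟩ := this
    simp only at hft
    subst hft
    exact ⟨tj, List.mem_toFinset.mpr ht⟩
  · intro j h1 hjn
    have := chain_ivt Prod.snd (fun p q h => by rcases h.2.1 with h' | h' <;> omega)
      π (1, 1) hc hh j h1 ⟨(m, n), hmem_last, hjn⟩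
    obtain ⟨⟨ti, tj⟩, ht, hft⟩ := this
    simp only at hft
    subst hft
    exact ⟨ti, List.mem_toFinset.mpr ht⟩
  · exact List.sum_toFinset _ hnd

lemma mem_corr_top {m n : ℕ} {C : Finset (ℕ × ℕ)} (hm : 1 ≤ m) (hn : 1 ≤ n)
    (hC : IsMonotoneCorrespondence m n C) : (m, n) ∈ C := by
  obtain ⟨hg, hmono, hrow, hcol⟩ := hC
  obtain ⟨j, hj⟩ := hrow m hm le_rfl
  obtain ⟨i, hi⟩ := hcol n hn le_rfl
  have hjn : j ≤ n := (hg _ hj).2.2.2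
  have him : i ≤ m := (hg _ hi).2.1
  rcases eq_or_lt_of_le hjn with rfl | hlt
  · exact hj
  · have := (hmono _ hj _ hi).2 hlt
    have : i = m := le_antisymm him this
    exact this ▸ hi

lemma corr_to_path {d : ℕ} (P Q : ℕ → EuclideanSpace ℝ (Fin d)) (C : Finset (ℕ × ℕ)) :
    ∀ m n : ℕ, 1 ≤ m → 1 ≤ n → IsMonotoneCorrespondence m n C →
      ∃ π : List (ℕ × ℕ), IsAdmissible m n (1, 1) (m, n) π ∧
        pathCost P Q π = ∑ p ∈ C, dist (P p.1) (Q p.2) := by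
  induction C using Finset.strongInduction with
  | _ C ih =>
    intro m n hm hn hC
    have hmn : (m, n) ∈ C := mem_corr_top hm hn hC
    obtain ⟨hg, hmono, hrow, hcol⟩ := hC
    set C' := C.erase (m, n) with hC'def
    by_cases hne : C'.Nonempty
    · -- the componentwise max of C'
      have hne1 : (C'.image Prod.fst).Nonempty := hne.image _
      set a := (C'.image Prod.fst).max' hne1 with ha_def
      have ha_mem : ∃ p ∈ C', p.1 = a := by
        have := (C'.image Prod.fst).max'_mem hne1
        simpa [Finset.mem_image] using this
      obtain ⟨p₀, hp₀, hp₀a⟩ := ha_mem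
      have hfst_le : ∀ q ∈ C', q.1 ≤ a := fun q hq =>
        Finset.le_max' _ _ (Finset.mem_image_of_mem _ hq)
      set Cb := C'.filter (fun p => p.1 = a) with hCb_def
      have hCb_ne : (Cb.image Prod.snd).Nonempty :=
        (Finset.image_nonempty).mpr ⟨p₀, Finset.mem_filter.mpr ⟨hp₀, hp₀a⟩⟩
      set b := (Cb.image Prod.snd).max' hCb_ne with hb_def
      have hab_mem : (a, b) ∈ C' := by
        have := (Cb.image Prod.snd).max'_mem hCb_ne
        rw [Finset.mem_image] at this
        obtain ⟨q, hq, hq2⟩ := this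
        rw [Finset.mem_filter] at hq
        have : (a, b) = q := by
          ext
          · exact hq.2.symm
          · exact hq2.symm
        exact this ▸ hq.1
      have hab_C : (a, b) ∈ C := Finset.mem_of_mem_erase hab_mem
      have hsnd_le : ∀ q ∈ C', q.2 ≤ b := by
        intro q hq
        rcases lt_or_eq_of_le (hfst_le q hq) with hlt | heq
        · exact (hmono q (Finset.mem_of_mem_erase hq) (a, b) hab_C).1 hlt
        · exact Finset.le_max' _ _
            (Finset.mem_image_of_mem _ (Finset.mem_filter.mpr ⟨hq, heq⟩))
      have hab_grid : InGrid m n (a, b) := hg _ hab_C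
      have ha1 : 1 ≤ a := hab_grid.1
      have ham : a ≤ m := hab_grid.2.1
      have hb1 : 1 ≤ b := hab_grid.2.2.1
      have hbn : b ≤ n := hab_grid.2.2.2
      have hab_ne : (a, b) ≠ (m, n) := Finset.ne_of_mem_erase hab_mem
      -- bounds on m, n
      have hma : m ≤ a + 1 := by
        by_contra hcon
        push_neg at hcon
        obtain ⟨j, hj⟩ := hrow (m - 1) (by omega) (by omega)
        have : (m - 1, j) ∈ C' := Finset.mem_erase.mpr ⟨by simp [Prod.ext_iff]; omega, hj⟩
        have := hfst_le _ this
        simp at this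
        omega
      have hnb : n ≤ b + 1 := by
        by_contra hcon
        push_neg at hcon
        obtain ⟨i, hi⟩ := hcol (n - 1) (by omega) (by omega)
        have : (i, n - 1) ∈ C' := Finset.mem_erase.mpr ⟨by simp [Prod.ext_iff]; omega, hi⟩
        have := hsnd_le _ this
        simp at this
        omega
      -- C' is a monotone correspondence for the grid [1..a] × [1..b]
      have hC'corr : IsMonotoneCorrespondence a b C' := by
        refine ⟨?_, ?_, ?_, ?_⟩
        · intro p hp
          have := hg p (Finset.mem_of_mem_erase hp)
          exact ⟨this.1, hfst_le p hp, this.2.2.1, hsnd_le p hp⟩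
        · intro p hp q hq
          exact hmono p (Finset.mem_of_mem_erase hp) q (Finset.mem_of_mem_erase hq)
        · intro i h1 hia
          obtain ⟨j, hj⟩ := hrow i h1 (le_trans hia ham)
          by_cases hij : (i, j) = (m, n)
          · have him : i = m := by rw [Prod.ext_iff] at hij; exact hij.1
            have : a = m := le_antisymm ham (him ▸ hia)
            exact ⟨b, by rw [← this] at him; exact him ▸ hab_mem⟩
          · exact ⟨j, Finset.mem_erase.mpr ⟨hij, hj⟩⟩
        · intro j h1 hjb
          obtain ⟨i, hi⟩ := hcol j h1 (le_trans hjb hbn)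
          by_cases hij : (i, j) = (m, n)
          · have hjn' : j = n := by rw [Prod.ext_iff] at hij; exact hij.2
            have : b = n := le_antisymm hbn (hjn' ▸ hjb)
            exact ⟨a, by rw [← this] at hjn'; exact hjn' ▸ hab_mem⟩
          · exact ⟨i, Finset.mem_erase.mpr ⟨hij, hi⟩⟩
      obtain ⟨π', ⟨hh', hl', hc', hg'⟩, hcost'⟩ :=
        ih C' (Finset.erase_ssubset hmn) a b ha1 hb1 hC'corr
      have hπ'ne : π' ≠ [] := by
        intro h; rw [h] at hh'; simp at hh'
      refine ⟨π' ++ [(m, n)], ⟨?_, ?_, ?_, ?_⟩, ?_⟩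
      · rw [List.head?_append_of_ne_nil _ hπ'ne]; exact hh'
      · simp [List.getLast?_concat]
      · refine List.IsChain.append hc' (List.isChain_singleton _) ?_
        intro x hx y hy
        simp only [List.head?_cons, Option.mem_def, Option.some_inj] at hy
        rw [Option.mem_def, hl', Option.some_inj] at hx
        subst hx; subst hy
        refine ⟨by omega, by omega, fun h => hab_ne h.symm⟩
      · intro p hp
        rcases List.mem_append.mp hp with h | h
        · have := hg' p h
          exact ⟨this.1, le_trans this.2.1 ham, this.2.2.1, le_trans this.2.2.2 hbn⟩
        · simp at h
          subst h
          exact ⟨hm, le_rfl, hn, le_rfl⟩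
      · rw [pathCost, List.map_append, List.sum_append]
        show pathCost P Q π' + _ = _
        rw [hcost']
        simp only [List.map_cons, List.map_nil, List.sum_cons, List.sum_nil, add_zero]
        exact Finset.sum_erase_add C _ hmn
    · -- C' is empty, so C = {(m, n)} and m = n = 1
      rw [Finset.not_nonempty_iff_eq_empty] at hne
      have hCsing : C = {(m, n)} := by
        apply Finset.eq_singleton_iff_unique_mem.mpr
        refine ⟨hmn, fun x hx => ?_⟩
        by_contra hxne
        have : x ∈ C' := Finset.mem_erase.mpr ⟨hxne, hx⟩
        rw [hne] at this
        exact absurd this (Finset.notMem_empty x)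
      obtain ⟨j, hj⟩ := hrow 1 le_rfl hm
      obtain ⟨i, hi⟩ := hcol 1 le_rfl hn
      rw [hCsing, Finset.mem_singleton, Prod.ext_iff] at hj hi
      have hm1 : m = 1 := hj.1.symm
      have hn1 : n = 1 := hi.2.symm
      subst hm1; subst hn1
      refine ⟨[(1, 1)], ⟨rfl, rfl, List.isChain_singleton _, ?_⟩, ?_⟩
      · intro p hp; simp at hp; subst hp; exact ⟨le_rfl, le_rfl, le_rfl, le_rfl⟩
      · rw [hCsing]; simp [pathCost]

/-- The correspondence formulation and the grid-path formulation of
dynamic time warping coincide. -/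
theorem dtw_correspondence_eq_path {d : ℕ} (m n : ℕ) (hm : 1 ≤ m) (hn : 1 ≤ n)
    (P Q : ℕ → EuclideanSpace ℝ (Fin d)) :
    sInf {c : ℝ | ∃ C : Finset (ℕ × ℕ), IsMonotoneCorrespondence m n C ∧
        c = ∑ p ∈ C, dist (P p.1) (Q p.2)} =
      sInf {c : ℝ | ∃ π : List (ℕ × ℕ),
        IsAdmissible m n (1, 1) (m, n) π ∧ c = pathCost P Q π} := by
  congr 1
  ext c
  simp only [Set.mem_setOf_eq]
  constructor
  · rintro ⟨C, hC, rfl⟩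
    obtain ⟨π, hπ, hcost⟩ := corr_to_path P Q C m n hm hn hC
    exact ⟨π, hπ, hcost.symm⟩
  · rintro ⟨π, hπ, rfl⟩
    obtain ⟨C, hC, hcost⟩ := path_to_corr m n P Q π hπ
    exact ⟨C, hC, hcost.symm⟩
end

section
/- Let P = ⟨p_1,…,p_n⟩ and Q = ⟨q_1,…,q_n⟩ be point sequences in ℝ^d of equal length n and g > 0 a gap penalty. If Σ_{i=1}^n ‖p_i − q_i‖ ≤ g, then ed(P,Q) = Σ_{i=1}^n ‖p_i − q_i‖, i.e., the diagonal (identity) matching is optimal. -/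
/-- The weight of the edge from `s` to `t` in the edit-distance grid graph:
a diagonal step from `(i,j)` to `(i+1,j+1)` costs `‖p_i - q_j‖`, while a
horizontal or vertical step costs the gap penalty `g`. -/
noncomputable def edgeWeight {d : ℕ} (g : ℝ) (P Q : ℕ → EuclideanSpace ℝ (Fin d))
    (s t : ℕ × ℕ) : ℝ :=
  if t.1 = s.1 + 1 ∧ t.2 = s.2 + 1 then dist (P s.1) (Q s.2) else g

/-- The weight of a path: the sum of its edge weights. -/
noncomputable def pathEdgeCost {d : ℕ} (g : ℝ) (P Q : ℕ → EuclideanSpace ℝ (Fin d))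
    (π : List (ℕ × ℕ)) : ℝ :=
  ((π.zip π.tail).map (fun s => edgeWeight g P Q s.1 s.2)).sum

/-- A monotone matching: a monotone set of correspondences in `[1..m] × [1..n]` in
which each row index and each column index occurs at most once. -/
def IsMonotoneMatching (m n : ℕ) (C : Finset (ℕ × ℕ)) : Prop :=
  (∀ p ∈ C, InGrid m n p) ∧
  (∀ p ∈ C, ∀ q ∈ C, (p.1 < q.1 → p.2 ≤ q.2) ∧ (p.2 < q.2 → p.1 ≤ q.1)) ∧
  (∀ p ∈ C, ∀ q ∈ C, p.1 = q.1 → p = q) ∧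
  (∀ p ∈ C, ∀ q ∈ C, p.2 = q.2 → p = q)

/-- Edit distance with gap penalty `g`: the minimum over monotone matchings `C` of
`∑_{(i,j) ∈ C} ‖p_i - q_j‖ + g (m + n - 2 |C|)`. -/
noncomputable def ed {d : ℕ} (g : ℝ) (m n : ℕ) (P Q : ℕ → EuclideanSpace ℝ (Fin d)) : ℝ :=
  sInf {c : ℝ | ∃ C : Finset (ℕ × ℕ), IsMonotoneMatching m n C ∧
    c = (∑ p ∈ C, dist (P p.1) (Q p.2)) + g * ((m : ℝ) + n - 2 * C.card)}

/-- If the two sequences have equal length `n` and the total distance along the diagonal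
is at most the gap penalty `g`, then the edit distance equals that total distance,
i.e., the diagonal (identity) matching is optimal. -/
theorem ed_eq_diag {d : ℕ} (g : ℝ) (hg : 0 < g) (n : ℕ) (hn : 1 ≤ n)
    (P Q : ℕ → EuclideanSpace ℝ (Fin d))
    (h : ∑ i ∈ Finset.Icc 1 n, dist (P i) (Q i) ≤ g) :
    ed g n n P Q = ∑ i ∈ Finset.Icc 1 n, dist (P i) (Q i) := by
  classical
  set S := ∑ i ∈ Finset.Icc 1 n, dist (P i) (Q i) with hSdef
  have hS0 : 0 ≤ S := Finset.sum_nonneg fun i _ => dist_nonneg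
  set D : Finset (ℕ × ℕ) := (Finset.Icc 1 n).image (fun i => (i, i)) with hDdef
  have hdiaginj : Function.Injective (fun i : ℕ => (i, i)) := by
    intro a b hab
    exact congrArg Prod.fst hab
  have hDcard : D.card = n := by
    rw [hDdef, Finset.card_image_of_injective _ hdiaginj, Nat.card_Icc]
    omega
  have hDmem : ∀ p ∈ D, p.2 = p.1 ∧ 1 ≤ p.1 ∧ p.1 ≤ n := by
    intro p hp
    rw [hDdef, Finset.mem_image] at hp
    obtain ⟨i, hi, rfl⟩ := hp
    rw [Finset.mem_Icc] at hi
    exact ⟨rfl, hi.1, hi.2⟩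
  have hDmatch : IsMonotoneMatching n n D := by
    refine ⟨?_, ?_, ?_, ?_⟩
    · intro p hp
      obtain ⟨h2, h1, hn'⟩ := hDmem p hp
      exact ⟨h1, hn', by omega, by omega⟩
    · intro p hp q hq
      obtain ⟨hp2, _, _⟩ := hDmem p hp
      obtain ⟨hq2, _, _⟩ := hDmem q hq
      omega
    · intro p hp q hq hpq
      obtain ⟨hp2, _, _⟩ := hDmem p hp
      obtain ⟨hq2, _, _⟩ := hDmem q hq
      exact Prod.ext hpq (by omega)
    · intro p hp q hq hpq
      obtain ⟨hp2, _, _⟩ := hDmem p hp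
      obtain ⟨hq2, _, _⟩ := hDmem q hq
      exact Prod.ext (by omega) hpq
  have hDsum : (∑ p ∈ D, dist (P p.1) (Q p.2)) = S := by
    rw [hDdef, Finset.sum_image (fun a _ b _ hab => hdiaginj hab)]
  have hSmem : S ∈ {c : ℝ | ∃ C : Finset (ℕ × ℕ), IsMonotoneMatching n n C ∧
      c = (∑ p ∈ C, dist (P p.1) (Q p.2)) + g * ((n : ℝ) + n - 2 * C.card)} := by
    refine ⟨D, hDmatch, ?_⟩
    rw [hDsum, hDcard]
    ring
  have hlb : ∀ c ∈ {c : ℝ | ∃ C : Finset (ℕ × ℕ), IsMonotoneMatching n n C ∧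
      c = (∑ p ∈ C, dist (P p.1) (Q p.2)) + g * ((n : ℝ) + n - 2 * C.card)}, S ≤ c := by
    rintro c ⟨C, ⟨hgrid, hmono, hinj1, hinj2⟩, rfl⟩
    have hsumC : 0 ≤ ∑ p ∈ C, dist (P p.1) (Q p.2) :=
      Finset.sum_nonneg fun p _ => dist_nonneg
    have hfst : Set.InjOn Prod.fst (C : Set (ℕ × ℕ)) :=
      fun p hp q hq hpq => hinj1 p hp q hq hpq
    have himg1 : C.image Prod.fst ⊆ Finset.Icc 1 n := by
      intro i hi
      rw [Finset.mem_image] at hi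
      obtain ⟨p, hp, rfl⟩ := hi
      obtain ⟨h1, h2, _, _⟩ := hgrid p hp
      exact Finset.mem_Icc.mpr ⟨h1, h2⟩
    have hcard1 : (C.image Prod.fst).card = C.card :=
      Finset.card_image_of_injOn hfst
    have hk : C.card ≤ n := by
      have h1 := Finset.card_le_card himg1
      rw [hcard1, Nat.card_Icc] at h1
      omega
    rcases lt_or_eq_of_le hk with hlt | heq
    · have h2 : (2 : ℝ) ≤ (n : ℝ) + n - 2 * C.card := by
        have hcast : (C.card : ℝ) + 1 ≤ n := by exact_mod_cast hlt
        linarith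
      have h3 : g * 2 ≤ g * ((n : ℝ) + n - 2 * C.card) :=
        mul_le_mul_of_nonneg_left h2 hg.le
      linarith
    · have himg1' : C.image Prod.fst = Finset.Icc 1 n := by
        apply Finset.eq_of_subset_of_card_le himg1
        rw [hcard1, ← heq, Nat.card_Icc]
        omega
      have hdiag : ∀ p ∈ C, p.2 = p.1 := by
        intro p hp
        obtain ⟨hp1, hp2, hp3, hp4⟩ := hgrid p hp
        have hA : C.filter (fun q => q.1 ≤ p.1) = C.filter (fun q => q.2 ≤ p.2) := by
          ext q
          simp only [Finset.mem_filter]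
          constructor
          · rintro ⟨hq, hle⟩
            refine ⟨hq, ?_⟩
            rcases lt_or_eq_of_le hle with hlt' | heq'
            · exact (hmono q hq p hp).1 hlt'
            · exact le_of_eq (congrArg Prod.snd (hinj1 q hq p hp heq'))
          · rintro ⟨hq, hle⟩
            refine ⟨hq, ?_⟩
            rcases lt_or_eq_of_le hle with hlt' | heq'
            · exact (hmono q hq p hp).2 hlt'
            · exact le_of_eq (congrArg Prod.fst (hinj2 q hq p hp heq'))
        have c1 : (C.filter (fun q => q.1 ≤ p.1)).card = p.1 := by
          have himgf : (C.filter (fun q => q.1 ≤ p.1)).image Prod.fst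
              = Finset.Icc 1 p.1 := by
            ext i
            simp only [Finset.mem_image, Finset.mem_filter, Finset.mem_Icc]
            constructor
            · rintro ⟨q, ⟨hq, hle⟩, rfl⟩
              exact ⟨(hgrid q hq).1, hle⟩
            · rintro ⟨h1i, h2i⟩
              have : i ∈ C.image Prod.fst := by
                rw [himg1', Finset.mem_Icc]
                exact ⟨h1i, le_trans h2i hp2⟩
              rw [Finset.mem_image] at this
              obtain ⟨q, hq, rfl⟩ := this
              exact ⟨q, ⟨hq, h2i⟩, rfl⟩
          have hcf : ((C.filter (fun q => q.1 ≤ p.1)).image Prod.fst).card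
              = (C.filter (fun q => q.1 ≤ p.1)).card :=
            Finset.card_image_of_injOn (hfst.mono (by
              intro q hq
              exact (Finset.mem_filter.mp hq).1))
          rw [himgf, Nat.card_Icc] at hcf
          omega
        have c2 : (C.filter (fun q => q.2 ≤ p.2)).card = p.2 := by
          have hsnd : Set.InjOn Prod.snd (C : Set (ℕ × ℕ)) :=
            fun p hp q hq hpq => hinj2 p hp q hq hpq
          have hcard2 : (C.image Prod.snd).card = C.card :=
            Finset.card_image_of_injOn hsnd
          have himg2 : C.image Prod.snd ⊆ Finset.Icc 1 n := by
            intro i hi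
            rw [Finset.mem_image] at hi
            obtain ⟨q, hq, rfl⟩ := hi
            obtain ⟨_, _, h3, h4⟩ := hgrid q hq
            exact Finset.mem_Icc.mpr ⟨h3, h4⟩
          have himg2' : C.image Prod.snd = Finset.Icc 1 n := by
            apply Finset.eq_of_subset_of_card_le himg2
            rw [hcard2, ← heq, Nat.card_Icc]
            omega
          have himgf : (C.filter (fun q => q.2 ≤ p.2)).image Prod.snd
              = Finset.Icc 1 p.2 := by
            ext i
            simp only [Finset.mem_image, Finset.mem_filter, Finset.mem_Icc]
            constructor
            · rintro ⟨q, ⟨hq, hle⟩, rfl⟩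
              exact ⟨(hgrid q hq).2.2.1, hle⟩
            · rintro ⟨h1i, h2i⟩
              have : i ∈ C.image Prod.snd := by
                rw [himg2', Finset.mem_Icc]
                exact ⟨h1i, le_trans h2i hp4⟩
              rw [Finset.mem_image] at this
              obtain ⟨q, hq, rfl⟩ := this
              exact ⟨q, ⟨hq, h2i⟩, rfl⟩
          have hcf : ((C.filter (fun q => q.2 ≤ p.2)).image Prod.snd).card
              = (C.filter (fun q => q.2 ≤ p.2)).card :=
            Finset.card_image_of_injOn (hsnd.mono (by
              intro q hq
              exact (Finset.mem_filter.mp hq).1))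
          rw [himgf, Nat.card_Icc] at hcf
          omega
        rw [hA] at c1
        omega
      have hCD : C = D := by
        apply Finset.eq_of_subset_of_card_le
        · intro p hp
          rw [hDdef, Finset.mem_image]
          refine ⟨p.1, ?_, ?_⟩
          · obtain ⟨h1, h2, _, _⟩ := hgrid p hp
            exact Finset.mem_Icc.mpr ⟨h1, h2⟩
          · exact Prod.ext rfl (hdiag p hp).symm
        · rw [hDcard, ← heq]
      rw [hCD, hDsum, hDcard]
      have hz : (n : ℝ) + n - 2 * n = 0 := by ring
      rw [hz, mul_zero, add_zero]
  have hbdd : BddBelow {c : ℝ | ∃ C : Finset (ℕ × ℕ), IsMonotoneMatching n n C ∧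
      c = (∑ p ∈ C, dist (P p.1) (Q p.2)) + g * ((n : ℝ) + n - 2 * C.card)} :=
    ⟨S, fun c hc => hlb c hc⟩
  rw [ed]
  exact le_antisymm (csInf_le hbdd hSmem) (le_csInf ⟨S, hSmem⟩ hlb)
end

section
/- Let (a,b) and (i,j) be grid points with a ≤ i, b ≤ j, and i−a ≥ j−b, and let w ≥ 0 and g ≥ 0. Consider admissible paths from (a,b) to (i,j) where each diagonal step (+1,+1) costs w and each horizontal or vertical step costs g. The minimum total cost of such a path equals (j−b)·min(w, 2g) + ((i−a) − (j−b))·g. -/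
/-- An admissible path from `s` to `t`. -/
def IsPath (s t : ℕ × ℕ) (π : List (ℕ × ℕ)) : Prop :=
  π.head? = some s ∧ π.getLast? = some t ∧ List.Chain' IsStep π

/-- The cost of a step: a diagonal step `(+1,+1)` costs `w`, a horizontal or vertical
step costs `g`. -/
def stepCost (w g : ℝ) (s t : ℕ × ℕ) : ℝ :=
  if t.1 = s.1 + 1 ∧ t.2 = s.2 + 1 then w else g

/-- The total cost of a path: the sum of the costs of its steps. -/
def pathStepCost (w g : ℝ) (π : List (ℕ × ℕ)) : ℝ :=
  ((π.zip π.tail).map (fun s => stepCost w g s.1 s.2)).sum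

lemma pathStepCost_cons (w g : ℝ) (s x : ℕ × ℕ) (xs : List (ℕ × ℕ)) :
    pathStepCost w g (s :: x :: xs) = stepCost w g s x + pathStepCost w g (x :: xs) := by
  simp [pathStepCost]

lemma path_cons {s s' t : ℕ × ℕ} {π : List (ℕ × ℕ)} (hstep : IsStep s s')
    (hp : IsPath s' t π) : IsPath s t (s :: π) := by
  obtain ⟨h1, h2, h3⟩ := hp
  cases π with
  | nil => simp at h1
  | cons x xs =>
    simp at h1; subst h1
    refine ⟨rfl, ?_, ?_⟩
    · rw [List.getLast?_cons_cons]; exact h2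
    · exact List.IsChain.cons_cons hstep h3

lemma cost_cons (w g : ℝ) {s s' t : ℕ × ℕ} {π : List (ℕ × ℕ)}
    (hp : IsPath s' t π) :
    pathStepCost w g (s :: π) = stepCost w g s s' + pathStepCost w g π := by
  obtain ⟨h1, _, _⟩ := hp
  cases π with
  | nil => simp at h1
  | cons x xs => simp at h1; subst h1; exact pathStepCost_cons w g s _ xs

lemma path_single (s : ℕ × ℕ) : IsPath s s [s] := by
  refine ⟨rfl, rfl, List.isChain_singleton s⟩

lemma cost_single (w g : ℝ) (s : ℕ × ℕ) : pathStepCost w g [s] = 0 := by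
  simp [pathStepCost]

/-- horizontal run -/
lemma horiz (w g : ℝ) : ∀ (dx : ℕ) (s : ℕ × ℕ),
    ∃ π, IsPath s (s.1 + dx, s.2) π ∧ pathStepCost w g π = dx * g := by
  intro dx
  induction dx with
  | zero => intro s; exact ⟨[s], by simpa using path_single s, by simp [cost_single]⟩
  | succ n ih =>
    intro s
    obtain ⟨π, hπ, hc⟩ := ih (s.1 + 1, s.2)
    have hstep : IsStep s (s.1 + 1, s.2) :=
      ⟨Or.inr rfl, Or.inl rfl, by simp [Prod.ext_iff]⟩
    have hp : IsPath s (s.1 + (n+1), s.2) (s :: π) := by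
      have : (s.1 + 1 + n, s.2) = (s.1 + (n+1), s.2) := by
        ext <;> simp <;> omega
      rw [← this]
      exact path_cons hstep hπ
    refine ⟨s :: π, hp, ?_⟩
    rw [cost_cons w g hπ, hc]
    have : stepCost w g s (s.1 + 1, s.2) = g := by
      simp [stepCost]
    rw [this]; push_cast; ring

/-- L-shaped path: no diagonals -/
lemma Lpath (w g : ℝ) : ∀ (dy dx : ℕ) (s : ℕ × ℕ),
    ∃ π, IsPath s (s.1 + dx, s.2 + dy) π ∧ pathStepCost w g π = (dx + dy : ℕ) * g := by
  intro dy
  induction dy with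
  | zero =>
    intro dx s
    obtain ⟨π, hπ, hc⟩ := horiz w g dx s
    exact ⟨π, by simpa using hπ, by simpa using hc⟩
  | succ n ih =>
    intro dx s
    obtain ⟨π, hπ, hc⟩ := ih dx (s.1, s.2 + 1)
    have hstep : IsStep s (s.1, s.2 + 1) :=
      ⟨Or.inl rfl, Or.inr rfl, by simp [Prod.ext_iff]⟩
    have hp : IsPath s (s.1 + dx, s.2 + (n+1)) (s :: π) := by
      have : ((s.1, s.2+1).1 + dx, (s.1, s.2+1).2 + n) = (s.1 + dx, s.2 + (n+1)) := by
        ext <;> simp <;> omega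
      rw [← this]
      exact path_cons hstep hπ
    refine ⟨s :: π, hp, ?_⟩
    rw [cost_cons w g hπ, hc]
    have : stepCost w g s (s.1, s.2 + 1) = g := by
      simp [stepCost]
    rw [this]; push_cast; ring

/-- diag then horizontal -/
lemma Dpath (w g : ℝ) : ∀ (dy dx : ℕ) (s : ℕ × ℕ), dy ≤ dx →
    ∃ π, IsPath s (s.1 + dx, s.2 + dy) π ∧
      pathStepCost w g π = (dy : ℕ) * w + ((dx - dy : ℕ) : ℝ) * g := by
  intro dy
  induction dy with
  | zero =>
    intro dx s _
    obtain ⟨π, hπ, hc⟩ := horiz w g dx s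
    exact ⟨π, by simpa using hπ, by simp [hc]⟩
  | succ n ih =>
    intro dx s hle
    obtain ⟨dx', rfl⟩ : ∃ dx', dx = dx' + 1 := ⟨dx - 1, by omega⟩
    obtain ⟨π, hπ, hc⟩ := ih dx' (s.1 + 1, s.2 + 1) (by omega)
    have hstep : IsStep s (s.1 + 1, s.2 + 1) :=
      ⟨Or.inr rfl, Or.inr rfl, by simp [Prod.ext_iff]⟩
    have hp : IsPath s (s.1 + (dx'+1), s.2 + (n+1)) (s :: π) := by
      have : ((s.1+1, s.2+1).1 + dx', (s.1+1, s.2+1).2 + n) = (s.1 + (dx'+1), s.2 + (n+1)) := by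
        ext <;> simp <;> omega
      rw [← this]
      exact path_cons hstep hπ
    refine ⟨s :: π, hp, ?_⟩
    rw [cost_cons w g hπ, hc]
    have : stepCost w g s (s.1 + 1, s.2 + 1) = w := by simp [stepCost]
    rw [this]
    have : dx' + 1 - (n + 1) = dx' - n := by omega
    rw [this]; push_cast; ring

/-- lower bound potential -/
noncomputable def Fval (w g : ℝ) (s t : ℕ × ℕ) : ℝ :=
  ((min (t.1 - s.1) (t.2 - s.2) : ℕ) : ℝ) * min w (2 * g)
    + ((max (t.1 - s.1) (t.2 - s.2) - min (t.1 - s.1) (t.2 - s.2) : ℕ) : ℝ) * g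

lemma path_le : ∀ (π : List (ℕ × ℕ)) (s t : ℕ × ℕ),
    IsPath s t π → s.1 ≤ t.1 ∧ s.2 ≤ t.2 := by
  intro π
  induction π with
  | nil => intro s t h; obtain ⟨h1, _, _⟩ := h; simp at h1
  | cons x xs ih =>
    intro s t h
    obtain ⟨h1, h2, h3⟩ := h
    simp at h1; subst h1
    cases xs with
    | nil => simp at h2; subst h2; omega
    | cons y ys =>
      obtain ⟨hstep, hchain⟩ := List.isChain_cons_cons.mp h3
      have hpath : IsPath y t (y :: ys) :=
        ⟨rfl, by rw [← List.getLast?_cons_cons (l := ys)]; exact h2, hchain⟩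
      have := ih y t hpath
      obtain ⟨hx, hy, _⟩ := hstep
      omega

lemma arithV (m g : ℝ) (hm2 : m ≤ 2 * g) (hm0 : 0 ≤ m) (hg : 0 ≤ g) (p q : ℕ) :
    ((min p (q + 1) : ℕ) : ℝ) * m + ((max p (q + 1) - min p (q + 1) : ℕ) : ℝ) * g
      ≤ g + (((min p q : ℕ) : ℝ) * m + ((max p q - min p q : ℕ) : ℝ) * g) := by
  rcases le_or_gt (q + 1) p with h | h
  · have e1 : min p (q + 1) = q + 1 := min_eq_right h
    have e2 : max p (q + 1) = p := max_eq_left h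
    have e3 : min p q = q := min_eq_right (by omega)
    have e4 : max p q = p := max_eq_left (by omega)
    rw [e1, e2, e3, e4, Nat.cast_sub h, Nat.cast_sub (by omega)]
    push_cast
    nlinarith
  · have e1 : min p (q + 1) = p := min_eq_left (by omega)
    have e2 : max p (q + 1) = q + 1 := max_eq_right (by omega)
    have e3 : min p q = p := min_eq_left (by omega)
    have e4 : max p q = q := max_eq_right (by omega)
    rw [e1, e2, e3, e4, Nat.cast_sub (by omega), Nat.cast_sub (by omega)]
    push_cast
    nlinarith

lemma arithD (m w g : ℝ) (hm1 : m ≤ w) (hm0 : 0 ≤ m) (hg : 0 ≤ g) (p q : ℕ) :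
    ((min (p + 1) (q + 1) : ℕ) : ℝ) * m
        + ((max (p + 1) (q + 1) - min (p + 1) (q + 1) : ℕ) : ℝ) * g
      ≤ w + (((min p q : ℕ) : ℝ) * m + ((max p q - min p q : ℕ) : ℝ) * g) := by
  have e1 : min (p + 1) (q + 1) = min p q + 1 := by omega
  have e2 : max (p + 1) (q + 1) - min (p + 1) (q + 1) = max p q - min p q := by omega
  rw [e2, e1]
  push_cast
  nlinarith

lemma step_ineq (w g : ℝ) (hw : 0 ≤ w) (hg : 0 ≤ g) {s y t : ℕ × ℕ}
    (hstep : IsStep s y) (h1 : y.1 ≤ t.1) (h2 : y.2 ≤ t.2) :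
    Fval w g s t ≤ stepCost w g s y + Fval w g y t := by
  obtain ⟨hx, hy, hne⟩ := hstep
  have hm1 : min w (2 * g) ≤ w := min_le_left _ _
  have hm2 : min w (2 * g) ≤ 2 * g := min_le_right _ _
  have hm0 : 0 ≤ min w (2 * g) := le_min hw (by linarith)
  rcases hx with hx | hx <;> rcases hy with hy | hy
  · exact absurd (Prod.ext hx hy) hne
  · -- vertical
    have hc : stepCost w g s y = g := by
      unfold stepCost; rw [if_neg]; rintro ⟨h, -⟩; omega
    rw [hc]
    unfold Fval
    have e1 : t.1 - s.1 = t.1 - y.1 := by omega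
    have e2 : t.2 - s.2 = (t.2 - y.2) + 1 := by omega
    rw [e1, e2]
    exact arithV _ g hm2 hm0 hg _ _
  · -- horizontal
    have hc : stepCost w g s y = g := by
      unfold stepCost; rw [if_neg]; rintro ⟨-, h⟩; omega
    rw [hc]
    unfold Fval
    have e1 : t.1 - s.1 = (t.1 - y.1) + 1 := by omega
    have e2 : t.2 - s.2 = t.2 - y.2 := by omega
    rw [e1, e2]
    have := arithV (min w (2 * g)) g hm2 hm0 hg (t.2 - y.2) (t.1 - y.1)
    rw [min_comm, max_comm] at this
    rw [min_comm (t.2 - y.2) (t.1 - y.1), max_comm (t.2 - y.2) (t.1 - y.1)] at this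
    exact this
  · -- diagonal
    have hc : stepCost w g s y = w := by
      unfold stepCost; rw [if_pos ⟨hx, hy⟩]
    rw [hc]
    unfold Fval
    have e1 : t.1 - s.1 = (t.1 - y.1) + 1 := by omega
    have e2 : t.2 - s.2 = (t.2 - y.2) + 1 := by omega
    rw [e1, e2]
    exact arithD _ w g hm1 hm0 hg _ _

lemma cost_lower (w g : ℝ) (hw : 0 ≤ w) (hg : 0 ≤ g) :
    ∀ (π : List (ℕ × ℕ)) (s t : ℕ × ℕ),
      IsPath s t π → Fval w g s t ≤ pathStepCost w g π := by
  intro π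
  induction π with
  | nil => intro s t h; obtain ⟨h1, -, -⟩ := h; simp at h1
  | cons x xs ih =>
    intro s t h
    obtain ⟨h1, h2, h3⟩ := h
    simp at h1; subst h1
    cases xs with
    | nil =>
      simp at h2; subst h2
      simp [Fval, cost_single]
    | cons y ys =>
      obtain ⟨hstep, hchain⟩ := List.isChain_cons_cons.mp h3
      have hpath : IsPath y t (y :: ys) :=
        ⟨rfl, by rw [← List.getLast?_cons_cons (l := ys)]; exact h2, hchain⟩
      have hle := path_le _ _ _ hpath
      have hih := ih y t hpath
      have hsi := step_ineq w g hw hg hstep hle.1 hle.2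
      rw [pathStepCost_cons]
      linarith

/-- If `a ≤ i`, `b ≤ j` and `i - a ≥ j - b`, the minimum total cost of an admissible
path from `(a,b)` to `(i,j)`, where each diagonal step costs `w` and each horizontal or
vertical step costs `g`, equals `(j - b)·min(w, 2g) + ((i - a) - (j - b))·g`. -/
theorem min_path_cost (a b i j : ℕ) (ha : a ≤ i) (hb : b ≤ j) (hd : j - b ≤ i - a)
    (w g : ℝ) (hw : 0 ≤ w) (hg : 0 ≤ g) :
    sInf {c : ℝ | ∃ π : List (ℕ × ℕ), IsPath (a, b) (i, j) π ∧ c = pathStepCost w g π} =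
      ((j - b : ℕ) : ℝ) * min w (2 * g) + ((i - a - (j - b) : ℕ) : ℝ) * g := by
  set T : ℝ := ((j - b : ℕ) : ℝ) * min w (2 * g) + ((i - a - (j - b) : ℕ) : ℝ) * g with hT
  have hFv : Fval w g (a, b) (i, j) = T := by
    unfold Fval
    have e1 : min ((i, j).1 - (a, b).1) ((i, j).2 - (a, b).2) = j - b := by
      simp; omega
    have e2 : max ((i, j).1 - (a, b).1) ((i, j).2 - (a, b).2) = i - a := by
      simp; omega
    rw [e1, e2]
  have hmem : T ∈ {c : ℝ | ∃ π : List (ℕ × ℕ),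
      IsPath (a, b) (i, j) π ∧ c = pathStepCost w g π} := by
    rcases le_total w (2 * g) with h | h
    · obtain ⟨π, hπ, hc⟩ := Dpath w g (j - b) (i - a) (a, b) hd
      have het : ((a, b).1 + (i - a), (a, b).2 + (j - b)) = (i, j) := by
        simp; omega
      rw [het] at hπ
      exact ⟨π, hπ, by rw [hc, hT, min_eq_left h]⟩
    · obtain ⟨π, hπ, hc⟩ := Lpath w g (j - b) (i - a) (a, b)
      have het : ((a, b).1 + (i - a), (a, b).2 + (j - b)) = (i, j) := by
        simp; omega
      rw [het] at hπ
      refine ⟨π, hπ, ?_⟩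
      rw [hc, hT, min_eq_right h, Nat.cast_sub hd]
      push_cast
      ring
  have hlb : ∀ c ∈ {c : ℝ | ∃ π : List (ℕ × ℕ),
      IsPath (a, b) (i, j) π ∧ c = pathStepCost w g π}, T ≤ c := by
    rintro c ⟨π, hπ, rfl⟩
    rw [← hFv]
    exact cost_lower w g hw hg π _ _ hπ
  exact le_antisymm (csInf_le ⟨T, hlb⟩ hmem) (le_csInf ⟨T, hmem⟩ hlb)
end

section
/- Let R = [x⁻..x⁺]×[y⁻..y⁺] be a rectangle of grid points with 1 ≤ x⁻ and 1 ≤ y⁻, and let (i,j) be a grid point that hits R, i.e., x⁻ < i ≤ x⁺ and y⁻ < j ≤ y⁺. Then every admissible path from (1,1) to (i,j) contains a grid point (a,b) with either a = x⁻ and y⁻ ≤ b ≤ j, or b = y⁻ and x⁻ ≤ a ≤ i; that is, the path passes through a point of the left or bottom boundary of R that is dominated by (i,j). -/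
lemma step_le {p q : ℕ × ℕ} (h : IsStep p q) : p.1 ≤ q.1 ∧ p.2 ≤ q.2 := by
  obtain ⟨h1, h2, _⟩ := h
  constructor <;> omega

lemma bound_lemma : ∀ (π : List (ℕ × ℕ)), List.Chain' IsStep π →
    ∀ t : ℕ × ℕ, π.getLast? = some t → ∀ p ∈ π, p.1 ≤ t.1 ∧ p.2 ≤ t.2 := by
  intro π
  induction π with
  | nil => intro _ t ht p hp; simp at hp
  | cons a l ih =>
    intro hc t ht p hp
    cases l with
    | nil =>
      simp at ht hp
      subst ht; subst hp; exact ⟨le_refl _, le_refl _⟩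
    | cons b l' =>
      rw [List.Chain', List.isChain_cons_cons] at hc
      have ht' : (b :: l').getLast? = some t := by
        rw [List.getLast?_cons_cons] at ht; exact ht
      rcases List.mem_cons.mp hp with rfl | hp'
      · have hb := ih hc.2 t ht' b List.mem_cons_self
        have hs := step_le hc.1
        exact ⟨le_trans hs.1 hb.1, le_trans hs.2 hb.2⟩
      · exact ih hc.2 t ht' p hp'

lemma cross_lemma (D : ℕ × ℕ → Prop) :
    ∀ (π : List (ℕ × ℕ)), List.Chain' IsStep π →
    ∀ s t : ℕ × ℕ, π.head? = some s → π.getLast? = some t → ¬ D s → D t →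
    ∃ q p, ¬ D q ∧ D p ∧ IsStep q p ∧ p ∈ π := by
  intro π
  induction π with
  | nil => intro _ s t hs; simp at hs
  | cons a l ih =>
    intro hc s t hs ht hDs hDt
    simp at hs; subst hs
    cases l with
    | nil => simp at ht; subst ht; exact absurd hDt hDs
    | cons b l' =>
      rw [List.Chain', List.isChain_cons_cons] at hc
      by_cases hDb : D b
      · exact ⟨a, b, hDs, hDb, hc.1, by simp⟩
      · have ht' : (b :: l').getLast? = some t := by
          rw [List.getLast?_cons_cons] at ht; exact ht
        obtain ⟨q, p, h1, h2, h3, h4⟩ := ih hc.2 b t rfl ht' hDb hDt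
        exact ⟨q, p, h1, h2, h3, List.mem_cons_of_mem _ h4⟩

/-- Let `R = [x⁻..x⁺] × [y⁻..y⁺]` be a rectangle of grid points with `1 ≤ x⁻`, `1 ≤ y⁻`,
and let `(i,j)` hit `R`, i.e., `x⁻ < i ≤ x⁺` and `y⁻ < j ≤ y⁺`. Then every admissible
path from `(1,1)` to `(i,j)` contains a grid point `(a,b)` with either `a = x⁻` and
`y⁻ ≤ b ≤ j`, or `b = y⁻` and `x⁻ ≤ a ≤ i`: the path passes through a point of the left
or bottom boundary of `R` dominated by `(i,j)`. -/
theorem path_through_boundary (xlo xhi ylo yhi i j : ℕ)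
    (hx : 1 ≤ xlo) (hy : 1 ≤ ylo)
    (hi₁ : xlo < i) (hi₂ : i ≤ xhi) (hj₁ : ylo < j) (hj₂ : j ≤ yhi)
    (π : List (ℕ × ℕ)) (hπ : IsPath (1, 1) (i, j) π) :
    ∃ p ∈ π, (p.1 = xlo ∧ ylo ≤ p.2 ∧ p.2 ≤ j) ∨ (p.2 = ylo ∧ xlo ≤ p.1 ∧ p.1 ≤ i) := by
  obtain ⟨hhead, hlast, hchain⟩ := hπ
  by_cases hDs : xlo ≤ (1:ℕ) ∧ ylo ≤ (1:ℕ)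
  · refine ⟨(1, 1), List.mem_of_mem_head? hhead, Or.inl ?_⟩
    simp only
    omega
  · obtain ⟨q, p, h1, h2, h3, h4⟩ :=
      cross_lemma (fun p => xlo ≤ p.1 ∧ ylo ≤ p.2) π hchain (1,1) (i,j) hhead hlast hDs
        ⟨le_of_lt hi₁, le_of_lt hj₁⟩
    have hb := bound_lemma π hchain (i, j) hlast p h4
    obtain ⟨hs1, hs2, _⟩ := h3
    refine ⟨p, h4, ?_⟩
    simp only at hb h1 h2 ⊢
    omega
end

section
/- Let Q = ⟨q_1,…,q_n⟩ be a point sequence in ℝ^d whose associated polygonal curve γ_Q is κ-packed, let μ > 0, and let ⟨q_{i_1},…,q_{i_k}⟩ be a left μ-simplification of Q. Then for every x ∈ ℝ^d and δ > 0, the number of indices t ∈ [1..k] with q_{i_t} in the closed ball B(x,δ) is at most κ(δ + μ)/μ + 1. -/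
open scoped Classical

/-- Let `Q = ⟨q_1, …, q_n⟩` be a point sequence in `ℝ^d` and let `γ : ℝ → ℝ^d` be its
associated polygonal curve, parametrized on `[1, n]` so that `γ(i) = q_i` for integer
`i ∈ [1..n]` and `γ` is the affine interpolation between `q_i` and `q_{i+1}` on
`[i, i+1]`.  Suppose `γ` is `κ`-packed, i.e., for every `x` and `r > 0` the length
(total variation) of `γ` restricted to the times in `[1, n]` at which it lies in the
closed ball `B(x, r)` is at most `κ·r`.  Let `⟨q_{idx 1}, …, q_{idx k}⟩` be a left
`μ`-simplification of `Q`: the indices `idx 1 < idx 2 < … < idx k` lie in `[1..n]`,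
every point strictly between consecutive chosen indices is within distance `μ` of the
earlier chosen point, and consecutive chosen points are more than `μ` apart.  Then for
every `x` and `δ > 0`, the number of `t ∈ [1..k]` with `q_{idx t}` in the closed ball
`B(x, δ)` is at most `κ(δ + μ)/μ + 1`. -/
theorem left_simplification_ball_count {d : ℕ} (n : ℕ) (hn : 1 ≤ n)
    (Q : ℕ → EuclideanSpace ℝ (Fin d)) (γ : ℝ → EuclideanSpace ℝ (Fin d))
    (κ μ : ℝ) (hκ : 0 ≤ κ) (hμ : 0 < μ)
    (hvertex : ∀ i : ℕ, 1 ≤ i → i ≤ n → γ i = Q i)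
    (hinterp : ∀ i : ℕ, 1 ≤ i → i < n → ∀ s ∈ Set.Icc (0 : ℝ) 1,
      γ ((i : ℝ) + s) = Q i + s • (Q (i + 1) - Q i))
    (hpacked : ∀ (x : EuclideanSpace ℝ (Fin d)) (r : ℝ), 0 < r →
      eVariationOn γ {u | u ∈ Set.Icc (1 : ℝ) n ∧ γ u ∈ Metric.closedBall x r} ≤
        ENNReal.ofReal (κ * r))
    (k : ℕ) (hk : 1 ≤ k) (idx : ℕ → ℕ)
    (hmono : ∀ a b, 1 ≤ a → a < b → b ≤ k → idx a < idx b)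
    (hlo : 1 ≤ idx 1) (hhi : idx k ≤ n)
    (hnear : ∀ t, 2 ≤ t → t ≤ k → ∀ j, idx (t - 1) < j → j < idx t →
      dist (Q j) (Q (idx (t - 1))) ≤ μ)
    (hfar : ∀ t, 2 ≤ t → t ≤ k → μ < dist (Q (idx (t - 1))) (Q (idx t)))
    (x : EuclideanSpace ℝ (Fin d)) (δ : ℝ) (hδ : 0 < δ) :
    ((((Finset.Icc 1 k).filter
        (fun t => Q (idx t) ∈ Metric.closedBall x δ)).card : ℝ)) ≤
      κ * (δ + μ) / μ + 1 := by
  classical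
  set S := (Finset.Icc 1 k).filter (fun t => Q (idx t) ∈ Metric.closedBall x δ) with hSdef
  have hmono' : ∀ a b, 1 ≤ a → a ≤ b → b ≤ k → idx a ≤ idx b := by
    intro a b ha hab hb
    rcases eq_or_lt_of_le hab with rfl | h
    · exact le_rfl
    · exact (hmono a b ha h hb).le
  have hidx_lo : ∀ t, 1 ≤ t → t ≤ k → 1 ≤ idx t := fun t ht htk =>
    le_trans hlo (hmono' 1 t le_rfl ht htk)
  have hidx_hi : ∀ t, 1 ≤ t → t ≤ k → idx t ≤ n := fun t ht htk =>
    le_trans (hmono' t k ht htk le_rfl) hhi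
  have cross : ∀ t, 2 ≤ t → t ≤ k → Q (idx t) ∈ Metric.closedBall x δ →
      ∃ w : ℝ, (idx (t - 1) : ℝ) ≤ w ∧ w ≤ (idx t : ℝ) ∧
        γ w ∈ Metric.closedBall x (δ + μ) ∧ dist (γ w) (Q (idx t)) = μ := by
    intro t ht2 htk hQt
    have ht1 : 1 ≤ t - 1 := by omega
    have htk1 : t - 1 ≤ k := by omega
    have hab : idx (t - 1) < idx t := hmono (t - 1) t ht1 (by omega) htk
    set a := idx (t - 1) with ha_def
    set b := idx t with hb_def
    have ha1 : 1 ≤ a := hidx_lo _ ht1 htk1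
    have hbn : b ≤ n := hidx_hi t (by omega) htk
    have hfab : μ < dist (Q a) (Q b) := hfar t ht2 htk
    set T := (Finset.Icc a b).filter (fun j => dist (Q j) (Q b) ≤ μ) with hTdef
    have hbT : b ∈ T := by
      simp only [hTdef, Finset.mem_filter, Finset.mem_Icc]
      exact ⟨⟨hab.le, le_rfl⟩, by simp [hμ.le]⟩
    have hTne : T.Nonempty := ⟨b, hbT⟩
    set j0 := T.min' hTne with hj0def
    have hj0T : j0 ∈ T := T.min'_mem hTne
    have hj0ab : a ≤ j0 ∧ j0 ≤ b := Finset.mem_Icc.mp (Finset.mem_filter.mp hj0T).1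
    have hj0le : dist (Q j0) (Q b) ≤ μ := (Finset.mem_filter.mp hj0T).2
    have haj0 : a < j0 := by
      rcases lt_or_eq_of_le hj0ab.1 with h | h
      · exact h
      · exfalso; rw [← h] at hj0le; linarith
    have hfj : μ < dist (Q (j0 - 1)) (Q b) := by
      by_contra h
      push_neg at h
      have hjT : j0 - 1 ∈ T := Finset.mem_filter.mpr
        ⟨Finset.mem_Icc.mpr ⟨by omega, by omega⟩, h⟩
      have := T.min'_le _ hjT
      omega
    set j := j0 - 1 with hjdef
    have hj1 : 1 ≤ j := by omega
    have hjn : j < n := by omega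
    have hjsucc : j + 1 = j0 := by omega
    set g : ℝ → ℝ := fun s => dist (Q j + s • (Q (j + 1) - Q j)) (Q b) with hgdef
    have hg : Continuous g := by
      apply Continuous.dist _ continuous_const
      exact continuous_const.add (continuous_id.smul continuous_const)
    have hg0 : g 0 = dist (Q j) (Q b) := by simp [hgdef]
    have hg1 : g 1 = dist (Q (j + 1)) (Q b) := by simp [hgdef]
    have hmem : μ ∈ Set.Icc (g 1) (g 0) := by
      constructor
      · rw [hg1, hjsucc]; exact hj0le
      · rw [hg0]; exact hfj.le
    obtain ⟨s, hs01, hgs⟩ :=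
      intermediate_value_Icc' (by norm_num : (0:ℝ) ≤ 1) hg.continuousOn hmem
    have hsγ : γ ((j : ℝ) + s) = Q j + s • (Q (j + 1) - Q j) := hinterp j hj1 hjn s hs01
    refine ⟨(j : ℝ) + s, ?_, ?_, ?_, ?_⟩
    · have hcast : (a : ℝ) ≤ (j : ℝ) := by exact_mod_cast (by omega : a ≤ j)
      linarith [hs01.1]
    · have hcast : (j : ℝ) + 1 ≤ (b : ℝ) := by exact_mod_cast (by omega : j + 1 ≤ b)
      linarith [hs01.2]
    · rw [Metric.mem_closedBall]
      have h1 : dist (γ ((j:ℝ) + s)) (Q b) = μ := by rw [hsγ]; exact hgs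
      have h2 : dist (Q b) x ≤ δ := Metric.mem_closedBall.mp hQt
      calc dist (γ ((j:ℝ) + s)) x ≤ dist (γ ((j:ℝ) + s)) (Q b) + dist (Q b) x :=
            dist_triangle _ _ _
        _ ≤ μ + δ := by rw [h1]; linarith
        _ = δ + μ := by ring
    · rw [hsγ]; exact hgs
  by_cases hm2 : S.card ≤ 1
  · have h1 : (S.card : ℝ) ≤ 1 := by exact_mod_cast hm2
    have hpos : 0 ≤ κ * (δ + μ) / μ := by positivity
    linarith
  push_neg at hm2
  set m := S.card with hmdef
  have hm2' : 2 ≤ m := hm2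
  set N := m - 1 with hNdef
  have hN1 : 1 ≤ N := by omega
  have hNm : N < m := by omega
  set te : ℕ → ℕ := fun j =>
    S.orderEmbOfFin hmdef.symm ⟨min j N, lt_of_le_of_lt (min_le_right j N) hNm⟩ with htedef
  have te_mem : ∀ j, te j ∈ S := fun j => S.orderEmbOfFin_mem hmdef.symm _
  have te_strict : ∀ a b, a < b → b ≤ N → te a < te b := by
    intro a b hab hbN
    exact (S.orderEmbOfFin hmdef.symm).strictMono (by simp only [Fin.mk_lt_mk]; omega)
  have hS_mem : ∀ t ∈ S, 1 ≤ t ∧ t ≤ k ∧ Q (idx t) ∈ Metric.closedBall x δ := by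
    intro t ht
    rw [hSdef, Finset.mem_filter, Finset.mem_Icc] at ht
    exact ⟨ht.1.1, ht.1.2, ht.2⟩
  have te_ge2 : ∀ j, 1 ≤ j → j ≤ N → 2 ≤ te j := by
    intro j hj hjN
    have h0 : 1 ≤ te 0 := (hS_mem _ (te_mem 0)).1
    have := te_strict 0 j hj hjN
    omega
  have hex : ∀ j : ℕ, ∃ w : ℝ, 1 ≤ j → j ≤ N →
      ((idx (te j - 1) : ℝ) ≤ w ∧ w ≤ (idx (te j) : ℝ) ∧
        γ w ∈ Metric.closedBall x (δ + μ) ∧ dist (γ w) (Q (idx (te j))) = μ) := by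
    intro j
    by_cases h : 1 ≤ j ∧ j ≤ N
    · obtain ⟨w, h1, h2, h3, h4⟩ := cross (te j) (te_ge2 j h.1 h.2)
        (hS_mem _ (te_mem j)).2.1 (hS_mem _ (te_mem j)).2.2
      exact ⟨w, fun _ _ => ⟨h1, h2, h3, h4⟩⟩
    · exact ⟨0, fun h1 h2 => absurd ⟨h1, h2⟩ h⟩
  choose w hw using hex
  set v : ℕ → ℝ := fun i =>
    if i < 2 * N then
      (if i % 2 = 0 then w (i / 2 + 1) else (idx (te (i / 2 + 1)) : ℝ))
    else (idx (te N) : ℝ) with hvdef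
  have hv_even : ∀ j, j < N → v (2 * j) = w (j + 1) := by
    intro j hj
    simp only [hvdef]
    rw [if_pos (by omega), if_pos (by omega)]
    congr 1
    omega
  have hv_odd : ∀ j, j < N → v (2 * j + 1) = (idx (te (j + 1)) : ℝ) := by
    intro j hj
    simp only [hvdef]
    rw [if_pos (by omega), if_neg (by omega)]
    have h2 : (2 * j + 1) / 2 = j := by omega
    rw [h2]
  have hv_mono : Monotone v := by
    apply monotone_nat_of_le_succ
    intro i
    by_cases hi : i < 2 * N
    · by_cases hpar : i % 2 = 0
      · obtain ⟨j, rfl⟩ : ∃ j, i = 2 * j := ⟨i / 2, by omega⟩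
        have hjN : j < N := by omega
        rw [hv_even j hjN, hv_odd j hjN]
        exact (hw (j + 1) (by omega) (by omega)).2.1
      · obtain ⟨j, rfl⟩ : ∃ j, i = 2 * j + 1 := ⟨i / 2, by omega⟩
        have hjN : j < N := by omega
        rw [hv_odd j hjN]
        by_cases hi2 : 2 * j + 1 + 1 < 2 * N
        · have hj1N : j + 1 < N := by omega
          have h2 : (2 * j + 1 + 1) = 2 * (j + 1) := by ring
          rw [h2, hv_even (j + 1) hj1N]
          have hlt : te (j + 1) < te (j + 2) := te_strict (j + 1) (j + 2) (by omega) (by omega)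
          have hge2 : 2 ≤ te (j + 2) := te_ge2 (j + 2) (by omega) (by omega)
          have hle : idx (te (j + 1)) ≤ idx (te (j + 2) - 1) :=
            hmono' _ _ (hS_mem _ (te_mem (j + 1))).1 (by omega) (by
              have := (hS_mem _ (te_mem (j + 2))).2.1; omega)
          have h1 := (hw (j + 2) (by omega) (by omega)).1
          calc ((idx (te (j + 1)) : ℝ)) ≤ (idx (te (j + 2) - 1) : ℝ) := by exact_mod_cast hle
            _ ≤ w (j + 2) := h1
        · have hj1 : j + 1 = N := by omega
          have hvv : v (2 * j + 1 + 1) = (idx (te N) : ℝ) := by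
            simp only [hvdef]; rw [if_neg (by omega)]
          rw [hvv, hj1]
    · have h1 : v i = (idx (te N) : ℝ) := by simp only [hvdef]; rw [if_neg hi]
      have h2 : v (i + 1) = (idx (te N) : ℝ) := by simp only [hvdef]; rw [if_neg (by omega)]
      rw [h1, h2]
  have hidxmem : ∀ j, 1 ≤ j → j ≤ N →
      ((idx (te j) : ℝ)) ∈ {u | u ∈ Set.Icc (1:ℝ) n ∧ γ u ∈ Metric.closedBall x (δ + μ)} := by
    intro j hj hjN
    have h1 : 1 ≤ idx (te j) := hidx_lo _ (hS_mem _ (te_mem j)).1 (hS_mem _ (te_mem j)).2.1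
    have h2 : idx (te j) ≤ n := hidx_hi _ (hS_mem _ (te_mem j)).1 (hS_mem _ (te_mem j)).2.1
    refine ⟨⟨by exact_mod_cast h1, by exact_mod_cast h2⟩, ?_⟩
    rw [hvertex _ h1 h2]
    have hball := (hS_mem _ (te_mem j)).2.2
    rw [Metric.mem_closedBall] at hball ⊢
    linarith
  have hv_mem : ∀ i, v i ∈ {u | u ∈ Set.Icc (1:ℝ) n ∧ γ u ∈ Metric.closedBall x (δ + μ)} := by
    have hwmem : ∀ j, 1 ≤ j → j ≤ N →
        w j ∈ {u | u ∈ Set.Icc (1:ℝ) n ∧ γ u ∈ Metric.closedBall x (δ + μ)} := by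
      intro j hj hjN
      obtain ⟨h1, h2, h3, h4⟩ := hw j hj hjN
      have hge2 : 2 ≤ te j := te_ge2 j hj hjN
      have htejk : te j ≤ k := (hS_mem _ (te_mem j)).2.1
      have ha1 : 1 ≤ idx (te j - 1) := hidx_lo _ (by omega) (by omega)
      have hbn : idx (te j) ≤ n := hidx_hi _ (by omega) htejk
      refine ⟨⟨?_, ?_⟩, h3⟩
      · calc (1:ℝ) ≤ (idx (te j - 1) : ℝ) := by exact_mod_cast ha1
          _ ≤ w j := h1
      · calc w j ≤ (idx (te j) : ℝ) := h2
          _ ≤ (n : ℝ) := by exact_mod_cast hbn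
    intro i
    by_cases hi : i < 2 * N
    · by_cases hpar : i % 2 = 0
      · obtain ⟨j, rfl⟩ : ∃ j, i = 2 * j := ⟨i / 2, by omega⟩
        rw [hv_even j (by omega)]
        exact hwmem (j + 1) (by omega) (by omega)
      · obtain ⟨j, rfl⟩ : ∃ j, i = 2 * j + 1 := ⟨i / 2, by omega⟩
        rw [hv_odd j (by omega)]
        exact hidxmem (j + 1) (by omega) (by omega)
    · have h1 : v i = (idx (te N) : ℝ) := by simp only [hvdef]; rw [if_neg hi]
      rw [h1]; exact hidxmem N hN1 le_rfl
  have hpair : ∀ j, j < N →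
      edist (γ (v (2 * j + 1))) (γ (v (2 * j))) = ENNReal.ofReal μ := by
    intro j hj
    rw [hv_even j hj, hv_odd j hj]
    have h1 : 1 ≤ idx (te (j + 1)) :=
      hidx_lo _ (hS_mem _ (te_mem (j + 1))).1 (hS_mem _ (te_mem (j + 1))).2.1
    have h2 : idx (te (j + 1)) ≤ n :=
      hidx_hi _ (hS_mem _ (te_mem (j + 1))).1 (hS_mem _ (te_mem (j + 1))).2.1
    rw [hvertex _ h1 h2, edist_dist, dist_comm, (hw (j + 1) (by omega) (by omega)).2.2.2]
  have hsum : (N : ENNReal) * ENNReal.ofReal μ ≤ ENNReal.ofReal (κ * (δ + μ)) := by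
    have hkey := eVariationOn.sum_le (f := γ) (n := 2 * N) hv_mono hv_mem
    have hsub : ∑ j ∈ Finset.range N, edist (γ (v (2 * j + 1))) (γ (v (2 * j))) ≤
        ∑ i ∈ Finset.range (2 * N), edist (γ (v (i + 1))) (γ (v i)) := by
      have himg : ∑ j ∈ Finset.range N, edist (γ (v (2 * j + 1))) (γ (v (2 * j))) =
          ∑ i ∈ (Finset.range N).image (fun j => 2 * j),
            edist (γ (v (i + 1))) (γ (v i)) := by
        rw [Finset.sum_image (by intro a _ b _ h; simp only at h; omega)]
      rw [himg]
      apply Finset.sum_le_sum_of_subset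
      intro i hi
      simp only [Finset.mem_image, Finset.mem_range] at hi ⊢
      obtain ⟨j, hj, rfl⟩ := hi
      omega
    calc (N : ENNReal) * ENNReal.ofReal μ
        = ∑ _j ∈ Finset.range N, ENNReal.ofReal μ := by
          rw [Finset.sum_const, Finset.card_range, nsmul_eq_mul]
      _ = ∑ j ∈ Finset.range N, edist (γ (v (2 * j + 1))) (γ (v (2 * j))) := by
          refine (Finset.sum_congr rfl ?_).symm
          intro j hj
          exact hpair j (Finset.mem_range.mp hj)
      _ ≤ ∑ i ∈ Finset.range (2 * N), edist (γ (v (i + 1))) (γ (v i)) := hsub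
      _ ≤ eVariationOn γ _ := hkey
      _ ≤ ENNReal.ofReal (κ * (δ + μ)) := hpacked x (δ + μ) (by linarith)
  have hreal : (N : ℝ) * μ ≤ κ * (δ + μ) := by
    have h1 : ENNReal.ofReal ((N : ℝ) * μ) ≤ ENNReal.ofReal (κ * (δ + μ)) := by
      rwa [ENNReal.ofReal_mul (by positivity), ENNReal.ofReal_natCast]
    exact (ENNReal.ofReal_le_ofReal_iff (by positivity)).mp h1
  have hfin : (N : ℝ) ≤ κ * (δ + μ) / μ := (le_div_iff₀ hμ).mpr hreal
  have hcard : (S.card : ℝ) = (N : ℝ) + 1 := by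
    have hmN : m = N + 1 := by omega
    rw [← hmdef, hmN]
    push_cast
    ring
  rw [hcard]
  linarith
end
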